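/- arXiv:1401.0212 — 5 statements merged into one kernel-verified Lean document; each statement's English description precedes it below -/
import Mathlib

section
/- Let U ⊆ ℝ^d be nonempty, convex, and compact, and let P be a Borel probability measure on ℝ^d. Suppose that for every v ∈ ℝ^d, the support function δ*(v|U) = sup_{u∈U} vᵀu satisfies δ*(v|U) ≥ VaR_ε^P(v), where VaR_ε^P(v) = inf{t : P(ũᵀv ≤ t) ≥ 1−ε}. Then for every x and every function f(u,x) that is concave in u, if f(u,x) ≤ 0 for all u ∈ U then P(f(ũ,x) ≤ 0) ≥ 1−ε. -/
open MeasureTheory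

/-- Value at Risk at level `ε` of the linear functional `u ↦ uᵀv` under `P`. -/
noncomputable def VaR {d : ℕ} (P : Measure (Fin d → ℝ)) (ε : ℝ) (v : Fin d → ℝ) : ℝ :=
  sInf {t : ℝ | ENNReal.ofReal (1 - ε) ≤ P {u | ∑ i, u i * v i ≤ t}}

lemma VaR_aux {d : ℕ} (P : Measure (Fin d → ℝ)) [IsProbabilityMeasure P]
    {ε : ℝ} (hε0 : 0 < ε) (v : Fin d → ℝ) {c : ℝ} (h : VaR P ε v ≤ c) :
    ENNReal.ofReal (1 - ε) ≤ P {u | ∑ i, u i * v i ≤ c} := by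
  have hcont : Continuous fun u : Fin d → ℝ => ∑ i, u i * v i :=
    continuous_finset_sum _ fun i _ => (continuous_apply i).mul continuous_const
  set A : ℝ → Set (Fin d → ℝ) := fun t => {u | ∑ i, u i * v i ≤ t} with hA
  have hAmono : ∀ {s t : ℝ}, s ≤ t → A s ⊆ A t := fun hst u hu => le_trans hu hst
  have hAmeas : ∀ t, MeasurableSet (A t) := fun t =>
    (isClosed_le hcont continuous_const).measurableSet
  set T : Set ℝ := {t : ℝ | ENNReal.ofReal (1 - ε) ≤ P (A t)} with hT
  -- T is nonempty
  have hunion : (⋃ n : ℕ, A n) = Set.univ := by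
    ext u
    simp only [Set.mem_iUnion, Set.mem_univ, iff_true]
    obtain ⟨n, hn⟩ := exists_nat_ge (∑ i, u i * v i)
    exact ⟨n, hn⟩
  have htend : Filter.Tendsto (fun n : ℕ => P (A n)) Filter.atTop (nhds 1) := by
    have := tendsto_measure_iUnion_atTop (μ := P) (s := fun n : ℕ => A n)
      (fun a b hab => hAmono (by exact_mod_cast hab))
    rw [hunion] at this
    rw [measure_univ] at this
    exact this
  have hlt1 : ENNReal.ofReal (1 - ε) < 1 := by
    calc ENNReal.ofReal (1 - ε) < ENNReal.ofReal 1 :=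
      (ENNReal.ofReal_lt_ofReal_iff (by norm_num)).2 (by linarith)
    _ = 1 := ENNReal.ofReal_one
  have hTne : T.Nonempty := by
    obtain ⟨n, hn⟩ := (htend.eventually_const_lt hlt1).exists
    exact ⟨n, hn.le⟩
  -- each approximation from above is in T
  have hkey : ∀ η : ℝ, 0 < η → ENNReal.ofReal (1 - ε) ≤ P (A (c + η)) := by
    intro η hη
    have : sInf T < c + η := lt_of_le_of_lt h (by linarith)
    obtain ⟨t, ht, htlt⟩ := exists_lt_of_csInf_lt hTne this
    exact le_trans ht (measure_mono (hAmono htlt.le))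
  -- continuity from above
  have hinter : (⋂ n : ℕ, A (c + 1 / (n + 1))) = A c := by
    ext u
    simp only [Set.mem_iInter, hA, Set.mem_setOf_eq]
    constructor
    · intro hu
      by_contra hlt
      push_neg at hlt
      obtain ⟨n, hn⟩ := exists_nat_one_div_lt (sub_pos.2 hlt)
      have := hu n
      have : (1 : ℝ) / (n + 1) < ∑ i, u i * v i - c := hn
      linarith [hu n]
    · intro hu n
      have : (0 : ℝ) < 1 / (n + 1) := by positivity
      linarith
  have htend2 : Filter.Tendsto (fun n : ℕ => P (A (c + 1 / (n + 1)))) Filter.atTop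
      (nhds (P (A c))) := by
    have := tendsto_measure_iInter_atTop (μ := P) (s := fun n : ℕ => A (c + 1 / (n + 1)))
      (fun n => (hAmeas _).nullMeasurableSet)
      (fun a b hab => hAmono (by
        have : (1 : ℝ) / (b + 1) ≤ 1 / (a + 1) := by
          apply one_div_le_one_div_of_le (by positivity)
          have : (a : ℝ) ≤ b := Nat.cast_le.2 hab
          linarith
        linarith))
      ⟨0, measure_ne_top P _⟩
    rw [hinter] at this
    exact this
  exact ge_of_tendsto' htend2 fun n => hkey _ (by positivity)

theorem stmt0 {d : ℕ} (P : Measure (Fin d → ℝ)) [IsProbabilityMeasure P]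
    (U : Set (Fin d → ℝ)) (hUne : U.Nonempty) (hUconv : Convex ℝ U) (hUcpt : IsCompact U)
    (ε : ℝ) (hε0 : 0 < ε) (hε1 : ε < 1)
    (hsupp : ∀ v : Fin d → ℝ, VaR P ε v ≤ sSup ((fun u => ∑ i, u i * v i) '' U))
    (f : (Fin d → ℝ) → ℝ) (hf : ConcaveOn ℝ Set.univ f) (hfc : Continuous f)
    (hrob : ∀ u ∈ U, f u ≤ 0) :
    ENNReal.ofReal (1 - ε) ≤ P {u | f u ≤ 0} := by
  set S : Set (Fin d → ℝ) := {u | 0 < f u} with hS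
  have hSconv : Convex ℝ S := by
    have := hf.convex_gt 0
    simpa [hS, Set.sep_univ] using this
  have hSopen : IsOpen S := isOpen_lt continuous_const hfc
  have hdisj : Disjoint S U := by
    rw [Set.disjoint_left]
    intro u huS huU
    exact absurd (hrob u huU) (not_le.2 huS)
  obtain ⟨φ, c, hφS, hφU⟩ := geometric_hahn_banach_open hSconv hSopen hUconv hdisj
  set v : Fin d → ℝ := fun i => -φ (fun j => if i = j then 1 else 0) with hv
  have hlin : ∀ u : Fin d → ℝ, ∑ i, u i * v i = -φ u := by
    intro u
    have := LinearMap.pi_apply_eq_sum_univ (φ.toLinearMap) u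
    simp only [ContinuousLinearMap.coe_coe, smul_eq_mul] at this
    rw [this, ← Finset.sum_neg_distrib]
    exact Finset.sum_congr rfl fun i _ => by rw [hv]; ring
  have hsup : sSup ((fun u => ∑ i, u i * v i) '' U) ≤ -c := by
    apply csSup_le (hUne.image _)
    rintro x ⟨u, huU, rfl⟩
    simp only [hlin u]
    linarith [hφU u huU]
  have hVaR : VaR P ε v ≤ -c := le_trans (hsupp v) hsup
  have := VaR_aux P hε0 v hVaR
  refine le_trans this (measure_mono ?_)
  intro u hu
  simp only [Set.mem_setOf_eq, hlin] at hu
  have hcu : c ≤ φ u := by linarith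
  by_contra hfu
  simp only [Set.mem_setOf_eq, not_le] at hfu
  exact absurd (hφS u hfu) (not_lt.2 hcu)
end

section
/- Let P be a probability distribution supported on finitely many points a_0,…,a_{n−1} ∈ ℝ^d with p_j = P(ũ = a_j), and let ε ∈ (0,1). Define U = { Σ_j q_j a_j : q ∈ Δ_n, q ≤ p/ε } where Δ_n is the probability simplex. Then for every v ∈ ℝ^d, sup_{u∈U} vᵀu = CVaR_ε^P(v) = min_t { t + (1/ε) Σ_j p_j (a_jᵀv − t)^+ }. -/
open MeasureTheory

private lemma cvar_aux {n : ℕ} (p c : Fin n → ℝ) (hp : ∀ j, 0 ≤ p j) (hp1 : ∑ j, p j = 1)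
    (ε : ℝ) (hε0 : 0 < ε) (hε1 : ε < 1) :
    sSup {x : ℝ | ∃ q : Fin n → ℝ, (∀ j, 0 ≤ q j) ∧ (∑ j, q j = 1) ∧
        (∀ j, q j ≤ p j / ε) ∧ x = ∑ j, q j * c j} =
      ⨅ t : ℝ, (t + (1 / ε) * ∑ j, p j * max (c j - t) 0) := by
  classical
  -- weak duality
  have weak : ∀ q : Fin n → ℝ, (∀ j, 0 ≤ q j) → (∑ j, q j = 1) → (∀ j, q j ≤ p j / ε) →
      ∀ t : ℝ, ∑ j, q j * c j ≤ t + (1 / ε) * ∑ j, p j * max (c j - t) 0 := by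
    intro q hq0 hq1 hqp t
    have h1 : ∑ j, q j * c j = t + ∑ j, q j * (c j - t) := by
      have h : ∑ j, q j * (c j - t) = ∑ j, q j * c j - (∑ j, q j) * t := by
        rw [Finset.sum_mul, ← Finset.sum_sub_distrib]
        exact Finset.sum_congr rfl fun j _ => by ring
      rw [h, hq1]; ring
    rw [h1]
    have h2 : ∀ j ∈ Finset.univ, q j * (c j - t) ≤ (1 / ε) * (p j * max (c j - t) 0) := by
      intro j _
      rcases le_or_gt (c j - t) 0 with h | h
      · have hle : q j * (c j - t) ≤ 0 := mul_nonpos_of_nonneg_of_nonpos (hq0 j) h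
        have h0 : 0 ≤ (1 / ε) * (p j * max (c j - t) 0) := by
          have := hp j; positivity
        linarith
      · rw [max_eq_left h.le]
        calc q j * (c j - t) ≤ (p j / ε) * (c j - t) :=
              mul_le_mul_of_nonneg_right (hqp j) h.le
          _ = (1 / ε) * (p j * (c j - t)) := by ring
    calc t + ∑ j, q j * (c j - t)
        ≤ t + ∑ j, (1 / ε) * (p j * max (c j - t) 0) :=
          (add_le_add_iff_left t).mpr (Finset.sum_le_sum h2)
      _ = t + (1 / ε) * ∑ j, p j * max (c j - t) 0 := by rw [Finset.mul_sum]
  -- nonemptiness of Fin n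
  have hne : (Finset.univ : Finset (Fin n)).Nonempty := by
    rcases Nat.eq_zero_or_pos n with h | h
    · subst h; simp at hp1
    · exact ⟨⟨0, h⟩, Finset.mem_univ _⟩
  set G : ℝ → ℝ := fun s => ∑ j ∈ Finset.univ.filter (fun j => s < c j), p j with hG
  set A : Finset ℝ := (Finset.univ.image c).filter (fun s => G s ≤ ε) with hA
  have hVne : (Finset.univ.image c).Nonempty := hne.image c
  have hAne : A.Nonempty := by
    refine ⟨(Finset.univ.image c).max' hVne, ?_⟩
    rw [hA, Finset.mem_filter]
    refine ⟨Finset.max'_mem _ _, ?_⟩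
    have hemp : Finset.univ.filter (fun j => (Finset.univ.image c).max' hVne < c j) = ∅ := by
      rw [Finset.filter_eq_empty_iff]
      intro j _
      exact not_lt.mpr (Finset.le_max' _ (c j) (Finset.mem_image_of_mem c (Finset.mem_univ j)))
    simp only [hG]
    rw [hemp, Finset.sum_empty]
    exact hε0.le
  set t0 : ℝ := A.min' hAne with ht0
  have ht0A : t0 ∈ A := A.min'_mem hAne
  have ht0A' := ht0A
  rw [hA, Finset.mem_filter] at ht0A'
  have ht1 : G t0 ≤ ε := ht0A'.2
  have hGnn : 0 ≤ G t0 := by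
    simp only [hG]; exact Finset.sum_nonneg fun j _ => hp j
  -- epsilon < mass at or above t0
  have h2 : ε < ∑ j ∈ Finset.univ.filter (fun j => t0 ≤ c j), p j := by
    rcases (Finset.univ.filter (fun j => c j < t0)).eq_empty_or_nonempty with hL | hL
    · have hall : Finset.univ.filter (fun j => t0 ≤ c j) = Finset.univ := by
        rw [Finset.filter_eq_self]
        intro j _
        by_contra h
        push_neg at h
        have hj : j ∈ Finset.univ.filter (fun j => c j < t0) :=
          Finset.mem_filter.mpr ⟨Finset.mem_univ j, h⟩
        rw [hL] at hj; exact absurd hj (Finset.notMem_empty j)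
      rw [hall, hp1]; exact hε1
    · obtain ⟨j0, hj0mem, hj0max⟩ := Finset.exists_max_image _ c hL
      have hj0lt : c j0 < t0 := (Finset.mem_filter.mp hj0mem).2
      have hj0V : c j0 ∈ Finset.univ.image c := Finset.mem_image_of_mem c (Finset.mem_univ j0)
      have hnotA : c j0 ∉ A := by
        intro h
        have := Finset.min'_le A _ h
        rw [← ht0] at this
        exact absurd hj0lt (not_lt.mpr this)
      have hGgt : ε < G (c j0) := by
        by_contra h
        push_neg at h
        exact hnotA (by rw [hA]; exact Finset.mem_filter.mpr ⟨hj0V, h⟩)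
      have hfeq : Finset.univ.filter (fun j => c j0 < c j)
          = Finset.univ.filter (fun j => t0 ≤ c j) := by
        ext j
        simp only [Finset.mem_filter, Finset.mem_univ, true_and]
        constructor
        · intro h
          by_contra hcon
          push_neg at hcon
          have hj : j ∈ Finset.univ.filter (fun j => c j < t0) :=
            Finset.mem_filter.mpr ⟨Finset.mem_univ j, hcon⟩
          exact absurd h (not_lt.mpr (hj0max j hj))
        · intro h; exact lt_of_lt_of_le hj0lt h
      calc ε < G (c j0) := hGgt
        _ = _ := by simp only [hG]; rw [hfeq]
  set m : ℝ := ∑ j ∈ Finset.univ.filter (fun j => c j = t0), p j with hm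
  have hunion : Finset.univ.filter (fun j => t0 ≤ c j)
      = Finset.univ.filter (fun j => c j = t0) ∪ Finset.univ.filter (fun j => t0 < c j) := by
    ext j
    simp only [Finset.mem_filter, Finset.mem_union, Finset.mem_univ, true_and]
    constructor
    · intro h
      rcases lt_or_eq_of_le h with h' | h'
      · exact Or.inr h'
      · exact Or.inl h'.symm
    · rintro (h | h)
      · exact h.ge
      · exact h.le
  have hdisj : Disjoint (Finset.univ.filter (fun j => c j = t0))
      (Finset.univ.filter (fun j => t0 < c j)) := by
    rw [Finset.disjoint_left]
    intro j h1 h2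
    have e1 := (Finset.mem_filter.mp h1).2
    have e2 := (Finset.mem_filter.mp h2).2
    rw [e1] at e2
    exact lt_irrefl t0 e2
  have hsum_split : ∑ j ∈ Finset.univ.filter (fun j => t0 ≤ c j), p j = m + G t0 := by
    rw [hunion, Finset.sum_union hdisj, hm]
  have hm0 : 0 < m := by
    rw [hsum_split] at h2
    linarith
  set lam : ℝ := (1 - G t0 / ε) / m with hlam
  have hlam0 : 0 ≤ lam := by
    apply div_nonneg _ hm0.le
    have hd : G t0 / ε ≤ 1 := (div_le_one hε0).mpr ht1
    linarith
  have hεkey : ε < m + G t0 := by rw [← hsum_split]; exact h2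
  have hlamle : lam ≤ 1 / ε := by
    rw [hlam, div_le_div_iff₀ hm0 hε0]
    have hexp : (1 - G t0 / ε) * ε = ε - G t0 := by field_simp
    rw [hexp, one_mul]
    linarith
  have hlm : lam * m = 1 - G t0 / ε := by
    rw [hlam]; exact div_mul_cancel₀ _ hm0.ne'
  set q : Fin n → ℝ :=
    fun j => (if t0 < c j then p j / ε else 0) + (if c j = t0 then lam * p j else 0) with hq
  have hq0 : ∀ j, 0 ≤ q j := by
    intro j
    simp only [hq]
    apply add_nonneg
    · split_ifs
      · exact div_nonneg (hp j) hε0.le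
      · exact le_refl 0
    · split_ifs
      · exact mul_nonneg hlam0 (hp j)
      · exact le_refl 0
  have hqp : ∀ j, q j ≤ p j / ε := by
    intro j
    simp only [hq]
    split_ifs with hb1 hb2 hb3
    · exact absurd hb1 (by rw [hb2]; exact lt_irrefl t0)
    · simp
    · calc (0 : ℝ) + lam * p j = lam * p j := by ring
        _ ≤ (1 / ε) * p j := mul_le_mul_of_nonneg_right hlamle (hp j)
        _ = p j / ε := by ring
    · simpa using div_nonneg (hp j) hε0.le
  have hsum1 : ∑ j, (if t0 < c j then p j / ε else 0 : ℝ) = G t0 / ε := by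
    simp only [hG]
    rw [Finset.sum_div, Finset.sum_filter]
  have hsum2 : ∑ j, (if c j = t0 then lam * p j else 0 : ℝ) = lam * m := by
    rw [hm, Finset.mul_sum, Finset.sum_filter]
  have hq1 : ∑ j, q j = 1 := by
    simp only [hq]
    rw [Finset.sum_add_distrib, hsum1, hsum2, hlm]
    ring
  have hqval : ∑ j, q j * c j = t0 + (1 / ε) * ∑ j, p j * max (c j - t0) 0 := by
    have e1 : ∑ j, q j * c j
        = ∑ j, (if t0 < c j then (p j * c j) / ε else 0)
          + ∑ j, (if c j = t0 then lam * p j * t0 else 0) := by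
      rw [← Finset.sum_add_distrib]
      apply Finset.sum_congr rfl
      intro j _
      simp only [hq]
      split_ifs with hb1 hb2 hb3
      · exact absurd hb1 (by rw [hb2]; exact lt_irrefl t0)
      · ring
      · rw [hb3]; ring
      · ring
    have e2 : ∑ j, (if t0 < c j then (p j * c j) / ε else 0 : ℝ)
        = (∑ j ∈ Finset.univ.filter (fun j => t0 < c j), p j * c j) / ε := by
      rw [Finset.sum_div, Finset.sum_filter]
    have e3 : ∑ j, (if c j = t0 then lam * p j * t0 else 0 : ℝ) = lam * m * t0 := by
      rw [hm, Finset.mul_sum, Finset.sum_mul, Finset.sum_filter]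
    have e4 : ∑ j, p j * max (c j - t0) 0
        = ∑ j ∈ Finset.univ.filter (fun j => t0 < c j), p j * (c j - t0) := by
      rw [Finset.sum_filter]
      apply Finset.sum_congr rfl
      intro j _
      rcases lt_or_ge t0 (c j) with h | h
      · rw [if_pos h, max_eq_left (by linarith)]
      · rw [if_neg (not_lt.mpr h), max_eq_right (sub_nonpos.mpr h), mul_zero]
    have e5 : ∑ j ∈ Finset.univ.filter (fun j => t0 < c j), p j * (c j - t0)
        = (∑ j ∈ Finset.univ.filter (fun j => t0 < c j), p j * c j) - G t0 * t0 := by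
      simp only [hG]
      rw [Finset.sum_mul, ← Finset.sum_sub_distrib]
      exact Finset.sum_congr rfl fun j _ => by ring
    rw [e1, e2, e3, e4, e5, hlm]
    field_simp
    ring
  -- feasibility of p itself
  have hpfeas : ∀ j, p j ≤ p j / ε := by
    intro j
    rw [le_div_iff₀ hε0]
    calc p j * ε ≤ p j * 1 := mul_le_mul_of_nonneg_left hε1.le (hp j)
      _ = p j := mul_one _
  have hx0 : (∑ j, p j * c j) ∈ {x : ℝ | ∃ q : Fin n → ℝ, (∀ j, 0 ≤ q j) ∧ (∑ j, q j = 1) ∧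
      (∀ j, q j ≤ p j / ε) ∧ x = ∑ j, q j * c j} := ⟨p, hp, hp1, hpfeas, rfl⟩
  have hSne : Set.Nonempty {x : ℝ | ∃ q : Fin n → ℝ, (∀ j, 0 ≤ q j) ∧ (∑ j, q j = 1) ∧
      (∀ j, q j ≤ p j / ε) ∧ x = ∑ j, q j * c j} := ⟨_, hx0⟩
  have hub : ∀ t : ℝ, ∀ x ∈ {x : ℝ | ∃ q : Fin n → ℝ, (∀ j, 0 ≤ q j) ∧ (∑ j, q j = 1) ∧
      (∀ j, q j ≤ p j / ε) ∧ x = ∑ j, q j * c j},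
      x ≤ t + (1 / ε) * ∑ j, p j * max (c j - t) 0 := by
    rintro t x ⟨q', hq0', hq1', hqp', rfl⟩
    exact weak q' hq0' hq1' hqp' t
  have hbddS : BddAbove {x : ℝ | ∃ q : Fin n → ℝ, (∀ j, 0 ≤ q j) ∧ (∑ j, q j = 1) ∧
      (∀ j, q j ≤ p j / ε) ∧ x = ∑ j, q j * c j} :=
    ⟨0 + (1 / ε) * ∑ j, p j * max (c j - 0) 0, fun x hx => hub 0 x hx⟩
  have hbddf : BddBelow (Set.range fun t : ℝ => t + (1 / ε) * ∑ j, p j * max (c j - t) 0) := by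
    refine ⟨∑ j, p j * c j, ?_⟩
    rintro x ⟨t, rfl⟩
    exact weak p hp hp1 hpfeas t
  have hmem : (t0 + (1 / ε) * ∑ j, p j * max (c j - t0) 0) ∈
      {x : ℝ | ∃ q : Fin n → ℝ, (∀ j, 0 ≤ q j) ∧ (∑ j, q j = 1) ∧
      (∀ j, q j ≤ p j / ε) ∧ x = ∑ j, q j * c j} := ⟨q, hq0, hq1, hqp, hqval.symm⟩
  apply le_antisymm
  · exact le_ciInf fun t => csSup_le hSne (fun x hx => hub t x hx)
  · exact le_trans (ciInf_le hbddf t0) (le_csSup hbddS hmem)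

private lemma sum_swap_key {d n : ℕ} (a : Fin n → Fin d → ℝ) (v : Fin d → ℝ) (q : Fin n → ℝ) :
    ∑ i, (∑ j, q j * a j i) * v i = ∑ j, q j * ∑ i, a j i * v i := by
  simp only [Finset.sum_mul, Finset.mul_sum]
  rw [Finset.sum_comm]
  exact Finset.sum_congr rfl fun j _ => Finset.sum_congr rfl fun i _ => by ring

/-- For a distribution with finite support `a_0, …, a_{n-1}` and probabilities `p`,
the support function of the CVaR uncertainty set equals the Rockafellar–Uryasev
representation of CVaR. -/
theorem stmt4 {d n : ℕ} (p : Fin n → ℝ) (hp : ∀ j, 0 ≤ p j) (hp1 : ∑ j, p j = 1)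
    (a : Fin n → Fin d → ℝ) (ε : ℝ) (hε0 : 0 < ε) (hε1 : ε < 1) (v : Fin d → ℝ) :
    sSup {x : ℝ | ∃ q : Fin n → ℝ, (∀ j, 0 ≤ q j) ∧ (∑ j, q j = 1) ∧
        (∀ j, q j ≤ p j / ε) ∧ x = ∑ i, (∑ j, q j * a j i) * v i} =
      ⨅ t : ℝ, (t + (1 / ε) * ∑ j, p j * max (∑ i, a j i * v i - t) 0) := by
  have h := cvar_aux p (fun j => ∑ i, a j i * v i) hp hp1 ε hε0 hε1
  have hsets : {x : ℝ | ∃ q : Fin n → ℝ, (∀ j, 0 ≤ q j) ∧ (∑ j, q j = 1) ∧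
      (∀ j, q j ≤ p j / ε) ∧ x = ∑ i, (∑ j, q j * a j i) * v i}
      = {x : ℝ | ∃ q : Fin n → ℝ, (∀ j, 0 ≤ q j) ∧ (∑ j, q j = 1) ∧
      (∀ j, q j ≤ p j / ε) ∧ x = ∑ j, q j * ∑ i, a j i * v i} := by
    ext x
    simp only [Set.mem_setOf_eq]
    constructor
    · rintro ⟨q, h0, h1, h2, rfl⟩
      exact ⟨q, h0, h1, h2, sum_swap_key a v q⟩
    · rintro ⟨q, h0, h1, h2, rfl⟩
      exact ⟨q, h0, h1, h2, (sum_swap_key a v q).symm⟩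
  rw [hsets]
  exact h
end

section
/- Let m_f, m_b ∈ ℝ^d, σ_f, σ_b ∈ ℝ^d with σ_{fi}, σ_{bi} > 0, and ε ∈ (0,1). Define U = { y₁ + y₂ − y₃ : y₂, y₃ ∈ ℝ^d_+, Σ_i [ y₂ᵢ²/(2σ_{fi}²) + y₃ᵢ²/(2σ_{bi}²) ] ≤ log(1/ε), m_{bi} ≤ y₁ᵢ ≤ m_{fi} ∀i }. Then for any v ∈ ℝ^d, sup_{u∈U} vᵀu = Σ_{i: vᵢ≥0} m_{fi} vᵢ + Σ_{i: vᵢ<0} m_{bi} vᵢ + sqrt( 2 log(1/ε) ( Σ_{i: vᵢ≥0} σ_{fi}² vᵢ² + Σ_{i: vᵢ<0} σ_{bi}² vᵢ² ) ). -/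
/-- The support function of the forward–backward deviations uncertainty set `U^FB_ε`. -/
theorem stmt8 {d : ℕ} (mf mb σf σb : Fin d → ℝ)
    (hσf : ∀ i, 0 < σf i) (hσb : ∀ i, 0 < σb i) (hm : ∀ i, mb i ≤ mf i)
    (ε : ℝ) (hε0 : 0 < ε) (hε1 : ε < 1) (v : Fin d → ℝ) :
    sSup {x : ℝ | ∃ y1 y2 y3 : Fin d → ℝ,
        (∀ i, 0 ≤ y2 i) ∧ (∀ i, 0 ≤ y3 i) ∧
        (∑ i, (y2 i ^ 2 / (2 * σf i ^ 2) + y3 i ^ 2 / (2 * σb i ^ 2))) ≤ Real.log (1 / ε) ∧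
        (∀ i, mb i ≤ y1 i ∧ y1 i ≤ mf i) ∧
        x = ∑ i, v i * (y1 i + y2 i - y3 i)} =
      (∑ i, if 0 ≤ v i then mf i * v i else mb i * v i) +
        Real.sqrt (2 * Real.log (1 / ε) *
          ∑ i, (if 0 ≤ v i then σf i ^ 2 else σb i ^ 2) * v i ^ 2) := by
  set L := Real.log (1 / ε) with hLdef
  have hL : 0 < L := Real.log_pos (by rw [lt_div_iff₀ hε0]; linarith)
  set S := ∑ i, (if 0 ≤ v i then σf i ^ 2 else σb i ^ 2) * v i ^ 2 with hSdef
  have hS : 0 ≤ S := by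
    apply Finset.sum_nonneg; intro i _
    have h1 : 0 ≤ (if 0 ≤ v i then σf i ^ 2 else σb i ^ 2) := by positivity
    positivity
  apply IsGreatest.csSup_eq
  constructor
  · -- membership: the bound is attained
    set t : ℝ := if S = 0 then 0 else Real.sqrt (2 * L / S) with htdef
    have ht0 : 0 ≤ t := by
      rw [htdef]; split
      · exact le_refl 0
      · exact Real.sqrt_nonneg _
    have htS2 : t * S = Real.sqrt (2 * L * S) := by
      by_cases hS0 : S = 0
      · simp [htdef, hS0]
      · have hSpos : 0 < S := lt_of_le_of_ne hS (Ne.symm hS0)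
        rw [htdef, if_neg hS0]
        rw [show (S : ℝ) = Real.sqrt (S ^ 2) by rw [Real.sqrt_sq hS],
          ← Real.sqrt_mul (by positivity)]
        congr 1
        field_simp
        ring_nf
        rw [Real.sq_sqrt (sq_nonneg S)]
    have ht2 : t ^ 2 / 2 * S ≤ L := by
      by_cases hS0 : S = 0
      · simp [htdef, hS0]; positivity
      · have hSpos : 0 < S := lt_of_le_of_ne hS (Ne.symm hS0)
        rw [htdef, if_neg hS0, Real.sq_sqrt (by positivity)]
        have heq : 2 * L / S / 2 * S = L := by field_simp
        linarith
    set Y1 : Fin d → ℝ := fun i => if 0 ≤ v i then mf i else mb i with hY1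
    set Y2 : Fin d → ℝ := fun i => t * (if 0 ≤ v i then σf i ^ 2 * v i else 0) with hY2
    set Y3 : Fin d → ℝ := fun i => t * (if 0 ≤ v i then 0 else -(σb i ^ 2 * v i)) with hY3
    have hA : ∀ i, 0 ≤ Y2 i := by
      intro i; rw [hY2]; dsimp only
      by_cases h : 0 ≤ v i
      · rw [if_pos h]
        exact mul_nonneg ht0 (mul_nonneg (sq_nonneg _) h)
      · rw [if_neg h]; simp
    have hB : ∀ i, 0 ≤ Y3 i := by
      intro i; rw [hY3]; dsimp only
      by_cases h : 0 ≤ v i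
      · rw [if_pos h]; simp
      · rw [if_neg h]
        have hv : v i ≤ 0 := le_of_not_ge h
        exact mul_nonneg ht0
          (neg_nonneg.mpr (mul_nonpos_of_nonneg_of_nonpos (sq_nonneg _) hv))
    have hC : (∑ i, (Y2 i ^ 2 / (2 * σf i ^ 2) + Y3 i ^ 2 / (2 * σb i ^ 2))) ≤ L := by
      calc (∑ i, (Y2 i ^ 2 / (2 * σf i ^ 2) + Y3 i ^ 2 / (2 * σb i ^ 2)))
          = ∑ i, t ^ 2 / 2 * ((if 0 ≤ v i then σf i ^ 2 else σb i ^ 2) * v i ^ 2) := by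
            apply Finset.sum_congr rfl; intro i _
            rw [hY2, hY3]; dsimp only
            have hf := (hσf i).ne'
            have hb := (hσb i).ne'
            by_cases h : 0 ≤ v i <;> simp only [if_pos, if_neg, h, if_true, if_false] <;>
              field_simp <;> ring
        _ = t ^ 2 / 2 * S := by rw [← Finset.mul_sum]
        _ ≤ L := ht2
    have hD : ∀ i, mb i ≤ Y1 i ∧ Y1 i ≤ mf i := by
      intro i; rw [hY1]; dsimp only
      by_cases h : 0 ≤ v i <;> simp [h, hm i]
    have hE : (∑ i, if 0 ≤ v i then mf i * v i else mb i * v i) + Real.sqrt (2 * L * S)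
        = ∑ i, v i * (Y1 i + Y2 i - Y3 i) := by
      have : (∑ i, v i * (Y1 i + Y2 i - Y3 i)) =
          ∑ i, ((if 0 ≤ v i then mf i * v i else mb i * v i) +
            t * ((if 0 ≤ v i then σf i ^ 2 else σb i ^ 2) * v i ^ 2)) := by
        apply Finset.sum_congr rfl; intro i _
        rw [hY1, hY2, hY3]; dsimp only
        by_cases h : 0 ≤ v i <;> simp [h] <;> ring
      rw [this, Finset.sum_add_distrib, ← Finset.mul_sum, ← hSdef, htS2]
    exact ⟨Y1, Y2, Y3, hA, hB, hC, hD, hE⟩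
  · -- upper bound
    rintro x ⟨y1, y2, y3, h2, h3, hcon, h1, rfl⟩
    have hsplit : ∑ i, v i * (y1 i + y2 i - y3 i) =
        (∑ i, v i * y1 i) + ∑ i, v i * (y2 i - y3 i) := by
      rw [← Finset.sum_add_distrib]; apply Finset.sum_congr rfl; intro i _; ring
    rw [hsplit]
    have hb1 : (∑ i, v i * y1 i) ≤ ∑ i, if 0 ≤ v i then mf i * v i else mb i * v i := by
      apply Finset.sum_le_sum; intro i _
      by_cases h : 0 ≤ v i
      · rw [if_pos h]; rw [mul_comm]
        exact mul_le_mul_of_nonneg_right (h1 i).2 h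
      · rw [if_neg h]; rw [mul_comm]
        have hv : v i ≤ 0 := le_of_not_ge h
        exact mul_le_mul_of_nonpos_right (h1 i).1 hv
    have hb2 : (∑ i, v i * (y2 i - y3 i)) ≤ Real.sqrt (2 * L * S) := by
      set c : Fin d → ℝ := fun i => if 0 ≤ v i then σf i * v i else -(σb i * v i) with hc
      set dd : Fin d → ℝ := fun i => if 0 ≤ v i then y2 i / σf i else y3 i / σb i with hdd
      have step1 : (∑ i, v i * (y2 i - y3 i)) ≤ ∑ i, c i * dd i := by
        apply Finset.sum_le_sum; intro i _
        by_cases h : 0 ≤ v i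
        · have hf := (hσf i).ne'
          have heq : c i * dd i = v i * y2 i := by
            simp only [hc, hdd, if_pos h]; field_simp
          rw [heq]
          nlinarith [mul_nonneg h (h3 i)]
        · have hb := (hσb i).ne'
          have hv : v i ≤ 0 := le_of_not_ge h
          have heq : c i * dd i = -(v i * y3 i) := by
            simp only [hc, hdd, if_neg h]; field_simp
          rw [heq]
          nlinarith [mul_nonpos_of_nonpos_of_nonneg hv (h2 i)]
      have stepc : (∑ i, c i ^ 2) = S := by
        apply Finset.sum_congr rfl; intro i _
        by_cases h : 0 ≤ v i <;> simp [hc, h] <;> ring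
      have stepd : (∑ i, dd i ^ 2) ≤ 2 * L := by
        calc (∑ i, dd i ^ 2)
            ≤ ∑ i, 2 * (y2 i ^ 2 / (2 * σf i ^ 2) + y3 i ^ 2 / (2 * σb i ^ 2)) := by
              apply Finset.sum_le_sum; intro i _
              have hf := hσf i
              have hb := hσb i
              by_cases h : 0 ≤ v i
              · simp only [hdd, if_pos h, div_pow]
                rw [mul_add]
                have h1' : y2 i ^ 2 / σf i ^ 2 = 2 * (y2 i ^ 2 / (2 * σf i ^ 2)) := by
                  field_simp
                rw [← h1']
                have : 0 ≤ 2 * (y3 i ^ 2 / (2 * σb i ^ 2)) := by positivity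
                linarith
              · simp only [hdd, if_neg h, div_pow]
                rw [mul_add]
                have h1' : y3 i ^ 2 / σb i ^ 2 = 2 * (y3 i ^ 2 / (2 * σb i ^ 2)) := by
                  field_simp
                rw [← h1']
                have : 0 ≤ 2 * (y2 i ^ 2 / (2 * σf i ^ 2)) := by positivity
                linarith
          _ = 2 * ∑ i, (y2 i ^ 2 / (2 * σf i ^ 2) + y3 i ^ 2 / (2 * σb i ^ 2)) := by
              rw [Finset.mul_sum]
          _ ≤ 2 * L := by linarith
      have cs := Finset.sum_mul_sq_le_sq_mul_sq Finset.univ c dd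
      have step2 : (∑ i, c i * dd i) ≤ Real.sqrt ((∑ i, c i ^ 2) * ∑ i, dd i ^ 2) := by
        have h' := Real.sqrt_le_sqrt cs
        rw [Real.sqrt_sq_eq_abs] at h'
        exact (le_abs_self _).trans h'
      have step3 : Real.sqrt ((∑ i, c i ^ 2) * ∑ i, dd i ^ 2) ≤ Real.sqrt (2 * L * S) := by
        rw [stepc]
        apply Real.sqrt_le_sqrt
        calc S * ∑ i, dd i ^ 2 ≤ S * (2 * L) := by
              apply mul_le_mul_of_nonneg_left stepd hS
          _ = 2 * L * S := by ring
      exact step1.trans (step2.trans step3)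
    linarith
end

section
/- Fix points û^{(1)} ≤ … ≤ û^{(N)} in ℝ (with û^{(0)} ≤ û^{(1)} and û^{(N)} ≤ û^{(N+1)}), Γ ∈ (0,1), and a non-decreasing function g : [û^{(0)}, û^{(N+1)}] → ℝ. Let P_KS be the set of Borel probability measures Q on [û^{(0)}, û^{(N+1)}] such that Q(ũ ≤ û^{(j)}) ≥ j/N − Γ and Q(ũ < û^{(j)}) ≤ (j−1)/N + Γ for all j = 1,…,N. Then sup_{Q ∈ P_KS} E^Q[g(ũ)] = Σ_{j=0}^{N+1} q_j^R(Γ) g(û^{(j)}), where q^R(Γ) is the discrete distribution with q_j^R(Γ) = q_{N+1−j}^L(Γ) and q^L(Γ) has q_0^L = Γ, q_j^L = 1/N for 1 ≤ j ≤ ⌊N(1−Γ)⌋, q_{⌊N(1−Γ)⌋+1}^L = 1 − Γ − ⌊N(1−Γ)⌋/N, and q_j^L = 0 otherwise. -/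
open MeasureTheory

/-- The discrete distribution `q^L(Γ)` on the indices `0, …, N+1`. -/
noncomputable def qL (N : ℕ) (Γ : ℝ) (j : ℕ) : ℝ :=
  if j = 0 then Γ
  else if j ≤ ⌊(N : ℝ) * (1 - Γ)⌋₊ then 1 / N
  else if j = ⌊(N : ℝ) * (1 - Γ)⌋₊ + 1 then 1 - Γ - (⌊(N : ℝ) * (1 - Γ)⌋₊ : ℝ) / N
  else 0

/-- The discrete distribution `q^R(Γ)`, given by `q_j^R(Γ) = q_{N+1−j}^L(Γ)`. -/
noncomputable def qR (N : ℕ) (Γ : ℝ) (j : ℕ) : ℝ := qL N Γ (N + 1 - j)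

section arith
variable {N : ℕ} {Γ : ℝ}

private lemma Kfacts (hN : 0 < N) (hΓ0 : 0 < Γ) (hΓ1 : Γ < 1) :
    (⌊(N : ℝ) * (1 - Γ)⌋₊ : ℝ) ≤ N * (1 - Γ) ∧ (N : ℝ) * (1 - Γ) < ⌊(N : ℝ) * (1 - Γ)⌋₊ + 1
      ∧ ⌊(N : ℝ) * (1 - Γ)⌋₊ < N := by
  have h0 : (0:ℝ) ≤ (N : ℝ) * (1 - Γ) := mul_nonneg (Nat.cast_nonneg N) (by linarith)
  have h1 := Nat.floor_le h0
  have h2 := Nat.lt_floor_add_one ((N : ℝ) * (1 - Γ))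
  refine ⟨h1, h2, ?_⟩
  have hNpos : (0:ℝ) < N := by exact_mod_cast hN
  have : (⌊(N : ℝ) * (1 - Γ)⌋₊ : ℝ) < N := by nlinarith
  exact_mod_cast this

private lemma qL_nonneg (hN : 0 < N) (hΓ0 : 0 < Γ) (hΓ1 : Γ < 1) (j : ℕ) : 0 ≤ qL N Γ j := by
  obtain ⟨h1, h2, h3⟩ := Kfacts hN hΓ0 hΓ1
  have hNpos : (0:ℝ) < N := by exact_mod_cast hN
  unfold qL
  split_ifs
  · linarith
  · positivity
  · have : (⌊(N:ℝ)*(1-Γ)⌋₊ : ℝ)/N ≤ 1 - Γ := by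
      rw [div_le_iff₀ hNpos]; nlinarith
    linarith
  · exact le_refl _

private lemma qR_nonneg (hN : 0 < N) (hΓ0 : 0 < Γ) (hΓ1 : Γ < 1) (j : ℕ) : 0 ≤ qR N Γ j :=
  qL_nonneg hN hΓ0 hΓ1 _

private lemma sum_qL (hN : 0 < N) (hΓ0 : 0 < Γ) (hΓ1 : Γ < 1) :
    ∀ k, k ≤ N + 1 → ∑ i ∈ Finset.range (k+1), qL N Γ i = min (Γ + k / N) 1 := by
  obtain ⟨h1, h2, h3⟩ := Kfacts hN hΓ0 hΓ1
  have hNpos : (0:ℝ) < N := by exact_mod_cast hN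
  obtain ⟨K, hK⟩ : ∃ K, ⌊(N : ℝ) * (1 - Γ)⌋₊ = K := ⟨_, rfl⟩
  rw [hK] at h1 h2 h3
  have hKdiv : (K:ℝ)/N ≤ 1 - Γ := by rw [div_le_iff₀ hNpos]; nlinarith
  have hKdiv2 : 1 - Γ < ((K:ℝ)+1)/N := by rw [lt_div_iff₀ hNpos]; nlinarith
  intro k hk
  induction k with
  | zero =>
    simp only [Finset.sum_range_one, qL, if_pos rfl]
    rw [min_eq_left (by simp; linarith)]
    simp
  | succ n ih =>
    have hn : n ≤ N + 1 := le_trans (Nat.le_succ n) hk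
    rw [Finset.sum_range_succ, ih hn]
    rcases Nat.lt_or_ge (n+1) (K+1) with h | h
    · -- n + 1 ≤ K
      have hle : n + 1 ≤ K := Nat.lt_succ_iff.mp h
      have hcast : (n:ℝ) + 1 ≤ K := by exact_mod_cast hle
      have hA : Γ + (n:ℝ)/N ≤ 1 := by
        have : (n:ℝ)/N ≤ (K:ℝ)/N := by gcongr; linarith
        linarith
      have hB : Γ + ((n:ℝ)+1)/N ≤ 1 := by
        have : ((n:ℝ)+1)/N ≤ (K:ℝ)/N := by gcongr
        linarith
      rw [min_eq_left hA]
      rw [show qL N Γ (n+1) = 1/N by simp only [qL, hK]; rw [if_neg (Nat.succ_ne_zero n), if_pos hle]]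
      rw [min_eq_left (by push_cast; exact hB)]
      push_cast
      ring
    · rcases Nat.eq_or_lt_of_le h with heq | hlt
      · -- n + 1 = K + 1, n = K
        have hnK : n = K := by omega
        subst hnK
        rw [min_eq_left (by linarith)]
        rw [show qL N Γ (n+1) = 1 - Γ - (n:ℝ)/N by
          simp only [qL, hK]
          rw [if_neg (Nat.succ_ne_zero n), if_neg (by omega)]
          simp]
        rw [min_eq_right (by push_cast; linarith)]
        ring
      · -- K + 1 < n + 1
        have hKn : K + 1 ≤ n := by omega
        have hcast : (K:ℝ) + 1 ≤ n := by exact_mod_cast hKn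
        have hA : 1 ≤ Γ + (n:ℝ)/N := by
          have : ((K:ℝ)+1)/N ≤ (n:ℝ)/N := by gcongr
          linarith
        rw [min_eq_right (by linarith)]
        rw [show qL N Γ (n+1) = 0 by
          simp only [qL, hK]
          rw [if_neg (Nat.succ_ne_zero n), if_neg (by omega), if_neg (by omega)]]
        rw [min_eq_right (by
          have h' : ((K:ℝ)+1)/N ≤ ((n:ℝ)+1)/N := by gcongr; linarith
          push_cast
          linarith)]
        ring

private lemma sum_qR_aux (hN : 0 < N) (hΓ0 : 0 < Γ) (hΓ1 : Γ < 1) :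
    ∀ j, j ≤ N → ∑ i ∈ Finset.range (j+1), qR N Γ i
      = 1 - ∑ i ∈ Finset.range (N - j + 1), qL N Γ i := by
  obtain ⟨h1, h2, h3⟩ := Kfacts hN hΓ0 hΓ1
  have hNpos : (0:ℝ) < N := by exact_mod_cast hN
  intro j hj
  induction j with
  | zero =>
    simp only [zero_add, Finset.sum_range_one, Nat.sub_zero]
    have hLN : ∑ i ∈ Finset.range (N+1), qL N Γ i = 1 := by
      rw [sum_qL hN hΓ0 hΓ1 N (Nat.le_succ N)]
      rw [min_eq_right (by rw [div_self (ne_of_gt hNpos)]; linarith)]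
    rw [hLN]
    unfold qR
    simp only [Nat.sub_zero, qL]
    rw [if_neg (Nat.succ_ne_zero N), if_neg (by omega), if_neg (by omega)]
    ring
  | succ n ih =>
    have hn : n ≤ N := le_trans (Nat.le_succ n) hj
    rw [Finset.sum_range_succ, ih hn]
    have hqR : qR N Γ (n+1) = qL N Γ (N - n) := by
      unfold qR; congr 1; omega
    have hsplit : N - n = (N - (n+1)) + 1 := by omega
    rw [hqR, hsplit]
    rw [show (N - (n+1)) + 1 + 1 = ((N - (n+1)) + 1) + 1 from rfl]
    rw [Finset.sum_range_succ (fun i => qL N Γ i) ((N - (n+1)) + 1)]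
    ring

private lemma sum_qR_eq_max (hN : 0 < N) (hΓ0 : 0 < Γ) (hΓ1 : Γ < 1) :
    ∀ j, j ≤ N → ∑ i ∈ Finset.range (j+1), qR N Γ i = max ((j:ℝ)/N - Γ) 0 := by
  have hNpos : (0:ℝ) < N := by exact_mod_cast hN
  intro j hj
  rw [sum_qR_aux hN hΓ0 hΓ1 j hj, sum_qL hN hΓ0 hΓ1 (N - j) (by omega)]
  have hcast : ((N - j : ℕ) : ℝ) = (N:ℝ) - j := by
    push_cast [Nat.cast_sub hj]; ring
  rw [hcast]
  have hdiv : ((N:ℝ) - j)/N = 1 - (j:ℝ)/N := by field_simp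
  rw [hdiv]
  rcases le_total ((j:ℝ)/N - Γ) 0 with h | h
  · rw [max_eq_right h, min_eq_right (by linarith)]; ring
  · rw [max_eq_left h, min_eq_left (by linarith)]; ring

private lemma sum_qR_total (hN : 0 < N) (hΓ0 : 0 < Γ) (hΓ1 : Γ < 1) :
    ∑ i ∈ Finset.range (N+2), qR N Γ i = 1 := by
  have hNpos : (0:ℝ) < N := by exact_mod_cast hN
  rw [show N + 2 = (N + 1) + 1 from rfl, Finset.sum_range_succ,
    sum_qR_eq_max hN hΓ0 hΓ1 N le_rfl]
  have hqR : qR N Γ (N+1) = Γ := by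
    unfold qR
    rw [show N + 1 - (N+1) = 0 from by omega]
    simp [qL]
  rw [hqR, div_self (ne_of_gt hNpos), max_eq_left (by linarith)]
  ring

end arith

private lemma umono_aux (N : ℕ) (uhat : ℕ → ℝ)
    (hmono : ∀ j, j ≤ N → uhat j ≤ uhat (j + 1)) :
    ∀ a b : ℕ, a ≤ b → b ≤ N + 1 → uhat a ≤ uhat b := by
  intro a b hab hb
  induction b with
  | zero => have : a = 0 := by omega
            simp [this]
  | succ n ih =>
    rcases Nat.eq_or_lt_of_le hab with rfl | h
    · exact le_rfl
    · exact le_trans (ih (by omega) (by omega)) (hmono n (by omega))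

private lemma mem_part (N : ℕ) (hN : 0 < N) (uhat : ℕ → ℝ)
    (hmono : ∀ j, j ≤ N → uhat j ≤ uhat (j + 1))
    (Γ : ℝ) (hΓ0 : 0 < Γ) (hΓ1 : Γ < 1)
    (g : ℝ → ℝ) :
    ∃ Q : Measure ℝ, IsProbabilityMeasure Q ∧
        Q {y | y < uhat 0} = 0 ∧ Q {y | uhat (N + 1) < y} = 0 ∧
        (∀ j : ℕ, 1 ≤ j → j ≤ N →
          ENNReal.ofReal ((j : ℝ) / N - Γ) ≤ Q {y | y ≤ uhat j} ∧
          Q {y | y < uhat j} ≤ ENNReal.ofReal (((j : ℝ) - 1) / N + Γ)) ∧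
        (∑ j ∈ Finset.range (N + 2), qR N Γ j * g (uhat j)) = ∫ y, g y ∂Q := by
  have hNpos : (0:ℝ) < N := by exact_mod_cast hN
  have umono := umono_aux N uhat hmono
  set Qs : Measure ℝ :=
    ∑ j ∈ Finset.range (N + 2), ENNReal.ofReal (qR N Γ j) • Measure.dirac (uhat j) with hQs
  have hQs_apply : ∀ s : Set ℝ,
      Qs s = ∑ j ∈ Finset.range (N+2),
        ENNReal.ofReal (qR N Γ j) * Set.indicator s 1 (uhat j) := by
    intro s
    rw [hQs]
    rw [show ((∑ j ∈ Finset.range (N + 2),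
        ENNReal.ofReal (qR N Γ j) • Measure.dirac (uhat j)) : Measure ℝ) s
      = ∑ j ∈ Finset.range (N+2),
        (ENNReal.ofReal (qR N Γ j) • Measure.dirac (uhat j)) s by
        rw [Measure.coe_finset_sum]; simp]
    refine Finset.sum_congr rfl (fun j hj => ?_)
    rw [Measure.smul_apply, Measure.dirac_apply, smul_eq_mul]
  have hprob : IsProbabilityMeasure Qs := by
    constructor
    rw [hQs_apply]
    simp only [Set.indicator_univ, Pi.one_apply, mul_one]
    rw [← ENNReal.ofReal_sum_of_nonneg (fun i _ => qR_nonneg hN hΓ0 hΓ1 i),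
      sum_qR_total hN hΓ0 hΓ1, ENNReal.ofReal_one]
  have hlow : Qs {y | y < uhat 0} = 0 := by
    rw [hQs_apply]
    refine Finset.sum_eq_zero (fun j hj => ?_)
    rw [Set.indicator_of_notMem, mul_zero]
    simp only [Set.mem_setOf_eq, not_lt]
    exact umono 0 j (Nat.zero_le j) (by have := Finset.mem_range.mp hj; omega)
  have hhigh : Qs {y | uhat (N+1) < y} = 0 := by
    rw [hQs_apply]
    refine Finset.sum_eq_zero (fun j hj => ?_)
    rw [Set.indicator_of_notMem, mul_zero]
    simp only [Set.mem_setOf_eq, not_lt]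
    exact umono j (N+1) (by have := Finset.mem_range.mp hj; omega) le_rfl
  have hcons : ∀ j : ℕ, 1 ≤ j → j ≤ N →
      ENNReal.ofReal ((j : ℝ) / N - Γ) ≤ Qs {y | y ≤ uhat j} ∧
      Qs {y | y < uhat j} ≤ ENNReal.ofReal (((j : ℝ) - 1) / N + Γ) := by
    intro j hj1 hjN
    constructor
    · rw [hQs_apply]
      calc ENNReal.ofReal ((j:ℝ)/N - Γ)
          ≤ ENNReal.ofReal (∑ i ∈ Finset.range (j+1), qR N Γ i) := by
            apply ENNReal.ofReal_le_ofReal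
            rw [sum_qR_eq_max hN hΓ0 hΓ1 j hjN]
            exact le_max_left _ _
        _ = ∑ i ∈ Finset.range (j+1), ENNReal.ofReal (qR N Γ i) :=
            ENNReal.ofReal_sum_of_nonneg (fun i _ => qR_nonneg hN hΓ0 hΓ1 i)
        _ ≤ ∑ i ∈ Finset.range (j+1),
              ENNReal.ofReal (qR N Γ i) * Set.indicator {y | y ≤ uhat j} 1 (uhat i) := by
            refine Finset.sum_le_sum (fun i hi => ?_)
            rw [Set.indicator_of_mem, Pi.one_apply, mul_one]
            exact umono i j (by have := Finset.mem_range.mp hi; omega) (by omega)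
        _ ≤ ∑ i ∈ Finset.range (N+2),
              ENNReal.ofReal (qR N Γ i) * Set.indicator {y | y ≤ uhat j} 1 (uhat i) :=
            Finset.sum_le_sum_of_subset (Finset.range_subset_range.mpr (by omega))
    · rw [hQs_apply]
      calc (∑ i ∈ Finset.range (N+2),
            ENNReal.ofReal (qR N Γ i) * Set.indicator {y | y < uhat j} 1 (uhat i))
          ≤ ∑ i ∈ Finset.range (N+2),
              (if i < j then ENNReal.ofReal (qR N Γ i) else 0) := by
            refine Finset.sum_le_sum (fun i hi => ?_)
            by_cases hij : i < j
            · rw [if_pos hij]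
              by_cases hmem : uhat i ∈ {y | y < uhat j}
              · rw [Set.indicator_of_mem hmem, Pi.one_apply, mul_one]
              · rw [Set.indicator_of_notMem hmem, mul_zero]; exact zero_le
            · rw [if_neg hij]
              rw [Set.indicator_of_notMem, mul_zero]
              simp only [Set.mem_setOf_eq, not_lt]
              exact umono j i (by omega) (by have := Finset.mem_range.mp hi; omega)
        _ = ∑ i ∈ Finset.range j, ENNReal.ofReal (qR N Γ i) := by
            rw [← Finset.sum_range_add_sum_Ico _ (show j ≤ N+2 by omega)]
            rw [show (∑ i ∈ Finset.Ico j (N+2),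
                (if i < j then ENNReal.ofReal (qR N Γ i) else 0)) = 0 from
              Finset.sum_eq_zero (fun i hi => by
                rw [if_neg]; have := (Finset.mem_Ico.mp hi).1; omega)]
            rw [add_zero]
            exact Finset.sum_congr rfl (fun i hi => by
              rw [if_pos (Finset.mem_range.mp hi)])
        _ = ENNReal.ofReal (∑ i ∈ Finset.range j, qR N Γ i) :=
            (ENNReal.ofReal_sum_of_nonneg (fun i _ => qR_nonneg hN hΓ0 hΓ1 i)).symm
        _ ≤ ENNReal.ofReal (((j : ℝ) - 1) / N + Γ) := by
            apply ENNReal.ofReal_le_ofReal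
            rw [show j = (j-1)+1 by omega, sum_qR_eq_max hN hΓ0 hΓ1 (j-1) (by omega)]
            have hcast : ((j - 1 : ℕ) : ℝ) = (j:ℝ) - 1 := by
              push_cast [Nat.cast_sub hj1]; ring
            rw [hcast, show ((j - 1 + 1 : ℕ) : ℝ) = (j:ℝ) by
              push_cast [Nat.cast_sub hj1]; ring]
            apply max_le
            · have : (0:ℝ) ≤ ((j:ℝ)-1)/N := by
                apply div_nonneg _ (le_of_lt hNpos)
                have : (1:ℝ) ≤ j := by exact_mod_cast hj1
                linarith
              linarith
            · have : (0:ℝ) ≤ ((j:ℝ)-1)/N := by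
                apply div_nonneg _ (le_of_lt hNpos)
                have : (1:ℝ) ≤ j := by exact_mod_cast hj1
                linarith
              linarith
  have hint : ∫ y, g y ∂Qs = ∑ j ∈ Finset.range (N+2), qR N Γ j * g (uhat j) := by
    rw [hQs]
    rw [integral_finset_sum_measure (fun i _ =>
      (((integrable_const (g (uhat i))).congr (ae_eq_dirac g).symm).smul_measure
        ENNReal.ofReal_ne_top))]
    refine Finset.sum_congr rfl (fun j hj => ?_)
    rw [integral_smul_measure, integral_dirac, ENNReal.toReal_ofReal
      (qR_nonneg hN hΓ0 hΓ1 j), smul_eq_mul]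
  exact ⟨Qs, hprob, hlow, hhigh, hcons, hint.symm⟩

private lemma ub_part (N : ℕ) (hN : 0 < N) (uhat : ℕ → ℝ)
    (hmono : ∀ j, j ≤ N → uhat j ≤ uhat (j + 1))
    (Γ : ℝ) (hΓ0 : 0 < Γ) (hΓ1 : Γ < 1)
    (g : ℝ → ℝ) (hg : MonotoneOn g (Set.Icc (uhat 0) (uhat (N + 1))))
    (Q : Measure ℝ) (hQprob : IsProbabilityMeasure Q)
    (hQlow : Q {y | y < uhat 0} = 0) (hQhigh : Q {y | uhat (N + 1) < y} = 0)
    (hQcons : ∀ j : ℕ, 1 ≤ j → j ≤ N →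
          ENNReal.ofReal ((j : ℝ) / N - Γ) ≤ Q {y | y ≤ uhat j} ∧
          Q {y | y < uhat j} ≤ ENNReal.ofReal (((j : ℝ) - 1) / N + Γ)) :
    ∫ y, g y ∂Q ≤ ∑ j ∈ Finset.range (N + 2), qR N Γ j * g (uhat j) := by
  have hNpos : (0:ℝ) < N := by exact_mod_cast hN
  have umono := umono_aux N uhat hmono
  have hu01 : uhat 0 ≤ uhat (N+1) := umono 0 (N+1) (Nat.zero_le _) le_rfl
  have hae : ∀ᵐ y ∂Q, y ∈ Set.Icc (uhat 0) (uhat (N+1)) := by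
    have h1 : ∀ᵐ y ∂Q, uhat 0 ≤ y := by
      rw [ae_iff]; simp only [not_le]; exact hQlow
    have h2 : ∀ᵐ y ∂Q, y ≤ uhat (N+1) := by
      rw [ae_iff]; simp only [not_le]; exact hQhigh
    filter_upwards [h1, h2] with y hy1 hy2
    exact ⟨hy1, hy2⟩
  -- the clamped function
  set c : ℝ → ℝ := fun y => max (uhat 0) (min y (uhat (N+1))) with hc
  have hcmem : ∀ y, c y ∈ Set.Icc (uhat 0) (uhat (N+1)) :=
    fun y => ⟨le_max_left _ _, max_le hu01 (min_le_right _ _)⟩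
  have hcmono : Monotone (fun y => g (c y)) := by
    intro a b hab
    exact hg (hcmem a) (hcmem b) (max_le_max le_rfl (min_le_min hab le_rfl))
  have haeg : (fun y => g (c y)) =ᵐ[Q] g := by
    filter_upwards [hae] with y hy
    rw [hc]
    simp only
    rw [min_eq_left hy.2, max_eq_right hy.1]
  have hgc_int : Integrable (fun y => g (c y)) Q := by
    refine (integrable_const (max |g (uhat 0)| |g (uhat (N+1))|)).mono'
      (hcmono.measurable.aestronglyMeasurable) (ae_of_all _ (fun y => ?_))
    have h1 : g (c y) ≤ g (uhat (N+1)) := hg (hcmem y) ⟨hu01, le_rfl⟩ (hcmem y).2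
    have h2 : g (uhat 0) ≤ g (c y) := hg ⟨le_rfl, hu01⟩ (hcmem y) (hcmem y).1
    rw [Real.norm_eq_abs, abs_le]
    constructor
    · have ha := neg_abs_le (g (uhat 0))
      have hb := le_max_left |g (uhat 0)| |g (uhat (N+1))|
      linarith
    · have ha := le_abs_self (g (uhat (N+1)))
      have hb := le_max_right |g (uhat 0)| |g (uhat (N+1))|
      linarith
  have hg_int : Integrable g Q := hgc_int.congr haeg
  -- the partition sets
  set A : ℕ → Set ℝ :=
    fun k => if k = 0 then Set.Iic (uhat 0) else Set.Ioc (uhat (k-1)) (uhat k) with hA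
  have hAmeas : ∀ k, MeasurableSet (A k) := by
    intro k; rw [hA]; dsimp only
    split_ifs
    · exact measurableSet_Iic
    · exact measurableSet_Ioc
  set m : ℕ → ℝ := fun k => (Q (A k)).toReal with hm
  have hh_int : Integrable
      (fun y => ∑ k ∈ Finset.range (N+2), Set.indicator (A k) (fun _ => g (uhat k)) y) Q :=
    integrable_finset_sum _ (fun k _ => (integrable_const _).indicator (hAmeas k))
  have hgh : ∀ᵐ y ∂Q, g y ≤
      ∑ k ∈ Finset.range (N+2), Set.indicator (A k) (fun _ => g (uhat k)) y := by
    filter_upwards [hae] with y hy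
    have hex : ∃ k, y ≤ uhat k := ⟨N+1, hy.2⟩
    have hkspec : y ≤ uhat (Nat.find hex) := Nat.find_spec hex
    have hkle : Nat.find hex ≤ N + 1 := Nat.find_min' hex hy.2
    set k := Nat.find hex with hk
    have hymem : y ∈ A k := by
      rw [hA]; dsimp only
      split_ifs with h0
      · exact h0 ▸ hkspec
      · refine ⟨?_, hkspec⟩
        have hlt : ¬ (y ≤ uhat (k-1)) := Nat.find_min hex (by omega)
        exact lt_of_not_ge hlt
    have hnot : ∀ j ∈ Finset.range (N+2), j ≠ k →
        Set.indicator (A j) (fun _ => g (uhat j)) y = 0 := by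
      intro j hj hjk
      apply Set.indicator_of_notMem
      have hjN : j ≤ N + 1 := by have := Finset.mem_range.mp hj; omega
      rcases lt_or_gt_of_ne hjk with hlt | hgt
      · have hky : uhat (k-1) < y := lt_of_not_ge (Nat.find_min hex (by omega))
        have huj : uhat j ≤ uhat (k-1) := umono j (k-1) (by omega) (by omega)
        rw [hA]; dsimp only
        split_ifs with h0
        · rw [← h0]
          simp only [Set.mem_Iic, not_le]
          exact lt_of_le_of_lt huj hky
        · exact fun hmem => absurd hmem.2 (not_le.mpr (lt_of_le_of_lt huj hky))
      · have huj : uhat k ≤ uhat (j-1) := umono k (j-1) (by omega) (by omega)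
        rw [hA]; dsimp only
        split_ifs with h0
        · exact absurd h0 (by omega)
        · exact fun hmem => absurd hmem.1 (not_lt.mpr (le_trans hkspec huj))
    have hyval : (∑ j ∈ Finset.range (N+2), Set.indicator (A j) (fun _ => g (uhat j)) y)
        = g (uhat k) := by
      rw [Finset.sum_eq_single_of_mem k (Finset.mem_range.mpr (by omega)) hnot]
      exact Set.indicator_of_mem hymem _
    rw [hyval]
    exact hg hy ⟨umono 0 k (Nat.zero_le _) hkle, umono k (N+1) hkle le_rfl⟩ hkspec
  have hstep12 : ∫ y, g y ∂Q ≤ ∑ k ∈ Finset.range (N+2), g (uhat k) * m k := by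
    calc ∫ y, g y ∂Q
        ≤ ∫ y, (∑ k ∈ Finset.range (N+2), Set.indicator (A k) (fun _ => g (uhat k)) y) ∂Q :=
          integral_mono_ae hg_int hh_int hgh
      _ = ∑ k ∈ Finset.range (N+2), g (uhat k) * m k := by
          rw [integral_finset_sum _ (fun k _ => (integrable_const _).indicator (hAmeas k))]
          refine Finset.sum_congr rfl (fun k _ => ?_)
          rw [integral_indicator_const _ (hAmeas k), smul_eq_mul, mul_comm]; rfl
  have hM : ∀ j, j ≤ N+1 →
      ∑ k ∈ Finset.range (j+1), m k = (Q (Set.Iic (uhat j))).toReal := by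
    intro j hj
    induction j with
    | zero =>
      simp only [zero_add, Finset.sum_range_one]
      rw [hm]; dsimp only
      rw [hA]; dsimp only
      rw [if_pos rfl]
    | succ n ih =>
      rw [Finset.sum_range_succ, ih (by omega)]
      have hA1 : A (n+1) = Set.Ioc (uhat n) (uhat (n+1)) := by
        rw [hA]; simp
      rw [hm]; dsimp only
      rw [hA1, ← ENNReal.toReal_add (measure_ne_top Q _) (measure_ne_top Q _),
        ← measure_union (Set.Iic_disjoint_Ioc le_rfl) measurableSet_Ioc,
        Set.Iic_union_Ioc_eq_Iic (umono n (n+1) (Nat.le_succ n) (by omega))]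
  have hIic1 : Q (Set.Iic (uhat (N+1))) = 1 := by
    have hcompl := measure_add_measure_compl (μ := Q) (measurableSet_Iic (a := uhat (N+1)))
    rw [Set.compl_Iic] at hcompl
    have hzero : Q (Set.Ioi (uhat (N+1))) = 0 := hQhigh
    rw [hzero, add_zero, measure_univ] at hcompl
    exact hcompl
  have hMtot : ∑ k ∈ Finset.range (N+2), m k = 1 := by
    have := hM (N+1) le_rfl
    rw [show N+2 = (N+1)+1 from rfl, this, hIic1, ENNReal.toReal_one]
  have hRM : ∀ i, i ≤ N →
      ∑ k ∈ Finset.range (i+1), qR N Γ k ≤ ∑ k ∈ Finset.range (i+1), m k := by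
    intro i hi
    rw [sum_qR_eq_max hN hΓ0 hΓ1 i hi, hM i (by omega)]
    apply max_le _ ENNReal.toReal_nonneg
    rcases Nat.eq_zero_or_pos i with rfl | hipos
    · have : ((0:ℕ):ℝ)/N - Γ ≤ 0 := by simp; positivity
      exact le_trans this ENNReal.toReal_nonneg
    · have hle : ENNReal.ofReal ((i:ℝ)/N - Γ) ≤ Q (Set.Iic (uhat i)) := (hQcons i hipos hi).1
      rcases le_total ((i:ℝ)/N - Γ) 0 with hneg | hpos
      · exact le_trans hneg ENNReal.toReal_nonneg
      · calc (i:ℝ)/N - Γ = (ENNReal.ofReal ((i:ℝ)/N - Γ)).toReal :=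
              (ENNReal.toReal_ofReal hpos).symm
          _ ≤ _ := ENNReal.toReal_mono (measure_ne_top Q _) hle
  have habel : ∑ k ∈ Finset.range (N+2), g (uhat k) * m k
      ≤ ∑ k ∈ Finset.range (N+2), g (uhat k) * qR N Γ k := by
    have e1 := Finset.sum_range_by_parts (fun k => g (uhat k)) m (N+2)
    have e2 := Finset.sum_range_by_parts (fun k => g (uhat k)) (qR N Γ) (N+2)
    simp only [smul_eq_mul, show N+2-1 = N+1 from rfl] at e1 e2
    rw [e1, e2, hMtot, sum_qR_total hN hΓ0 hΓ1]
    apply sub_le_sub_left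
    refine Finset.sum_le_sum (fun i hi => ?_)
    have hi' : i < N+1 := Finset.mem_range.mp hi
    have hΔ : 0 ≤ g (uhat (i+1)) - g (uhat i) := by
      have := hg ⟨umono 0 i (Nat.zero_le _) (by omega), umono i (N+1) (by omega) le_rfl⟩
        ⟨umono 0 (i+1) (Nat.zero_le _) (by omega), umono (i+1) (N+1) (by omega) le_rfl⟩
        (umono i (i+1) (Nat.le_succ i) (by omega))
      linarith
    exact mul_le_mul_of_nonneg_left (hRM i (by omega)) hΔ
  calc ∫ y, g y ∂Q ≤ ∑ k ∈ Finset.range (N+2), g (uhat k) * m k := hstep12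
    _ ≤ ∑ k ∈ Finset.range (N+2), g (uhat k) * qR N Γ k := habel
    _ = ∑ k ∈ Finset.range (N+2), qR N Γ k * g (uhat k) :=
        Finset.sum_congr rfl (fun k _ => mul_comm _ _)



/-- Worst-case expectation of a non-decreasing function over the Kolmogorov–Smirnov
confidence region: the supremum is attained by the discrete distribution `q^R(Γ)`
supported on the (ordered) data points. -/
theorem stmt15 (N : ℕ) (hN : 0 < N) (uhat : ℕ → ℝ)
    (hmono : ∀ j, j ≤ N → uhat j ≤ uhat (j + 1))
    (Γ : ℝ) (hΓ0 : 0 < Γ) (hΓ1 : Γ < 1)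
    (g : ℝ → ℝ) (hg : MonotoneOn g (Set.Icc (uhat 0) (uhat (N + 1)))) :
    sSup {x : ℝ | ∃ Q : Measure ℝ, IsProbabilityMeasure Q ∧
        Q {y | y < uhat 0} = 0 ∧ Q {y | uhat (N + 1) < y} = 0 ∧
        (∀ j : ℕ, 1 ≤ j → j ≤ N →
          ENNReal.ofReal ((j : ℝ) / N - Γ) ≤ Q {y | y ≤ uhat j} ∧
          Q {y | y < uhat j} ≤ ENNReal.ofReal (((j : ℝ) - 1) / N + Γ)) ∧
        x = ∫ y, g y ∂Q} =
      ∑ j ∈ Finset.range (N + 2), qR N Γ j * g (uhat j) := by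
  apply le_antisymm
  · apply csSup_le
    · obtain ⟨Q, h1, h2, h3, h4, h5⟩ := mem_part N hN uhat hmono Γ hΓ0 hΓ1 g
      exact ⟨∑ j ∈ Finset.range (N + 2), qR N Γ j * g (uhat j), Q, h1, h2, h3, h4, h5⟩
    · rintro x ⟨Q, hQ1, hQ2, hQ3, hQ4, rfl⟩
      exact ub_part N hN uhat hmono Γ hΓ0 hΓ1 g hg Q hQ1 hQ2 hQ3 hQ4
  · apply le_csSup
    · refine ⟨∑ j ∈ Finset.range (N + 2), qR N Γ j * g (uhat j), fun x hx => ?_⟩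
      obtain ⟨Q, hQ1, hQ2, hQ3, hQ4, rfl⟩ := hx
      exact ub_part N hN uhat hmono Γ hΓ0 hΓ1 g hg Q hQ1 hQ2 hQ3 hQ4
    · obtain ⟨Q, h1, h2, h3, h4, h5⟩ := mem_part N hN uhat hmono Γ hΓ0 hΓ1 g
      exact ⟨Q, h1, h2, h3, h4, h5⟩
end

section
/- Suppose for each j = 1,…,m, the event A_j (over the random sample S) 'U_j(S) implies a probabilistic guarantee at level ε_j for P*' holds whenever the single event A = 'the family {U(S,ε): 0<ε<1} simultaneously implies a probabilistic guarantee' holds, and P(A) ≥ 1−α. If Σ_j ε_j ≤ ε̄ and x satisfies f_j(u,x) ≤ 0 for all u ∈ U_j(S) and each j, then with probability at least 1−α over the sample, P*( max_j f_j(ũ,x) ≤ 0 ) ≥ 1 − ε̄. -/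
open MeasureTheory

/-- A set `U` implies a probabilistic guarantee at level `ε` for `P`: for every
concave (continuous) `f`, robust feasibility over `U` implies `P(f(ũ) ≤ 0) ≥ 1−ε`. -/
def ImpliesGuarantee {d : ℕ} (P : Measure (Fin d → ℝ)) (U : Set (Fin d → ℝ)) (ε : ℝ) : Prop :=
  ∀ g : (Fin d → ℝ) → ℝ, ConcaveOn ℝ Set.univ g → Continuous g →
    (∀ u ∈ U, g u ≤ 0) → ENNReal.ofReal (1 - ε) ≤ P {u | g u ≤ 0}

/-- Simultaneous guarantees plus a union bound: if on an event `A` of sampling-probability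
at least `1−α` each data-driven set `U_j(S)` implies a probabilistic guarantee at level
`ε_j` with `Σ_j ε_j ≤ ε̄`, and `x` is robust feasible for every constraint, then with
probability at least `1−α` over the sample, all uncertain constraints hold simultaneously
with `P*`-probability at least `1−ε̄`. -/
theorem stmt19 {d m : ℕ} {Ω : Type*} [MeasurableSpace Ω]
    (Q : Measure Ω) [IsProbabilityMeasure Q]
    (P : Measure (Fin d → ℝ)) [IsProbabilityMeasure P]
    (A : Set Ω) (α : ℝ) (hA : ENNReal.ofReal (1 - α) ≤ Q A)
    (U : Fin m → Ω → Set (Fin d → ℝ)) (ε : Fin m → ℝ) (εbar : ℝ)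
    (hε : ∀ j, 0 < ε j) (hsum : ∑ j, ε j ≤ εbar)
    (himp : ∀ ω ∈ A, ∀ j, ImpliesGuarantee P (U j ω) (ε j))
    (f : Fin m → (Fin d → ℝ) → ℝ)
    (hconc : ∀ j, ConcaveOn ℝ Set.univ (f j)) (hcont : ∀ j, Continuous (f j))
    (hfeas : ∀ ω, ∀ j, ∀ u ∈ U j ω, f j u ≤ 0) :
    ENNReal.ofReal (1 - α) ≤
      Q {ω | ENNReal.ofReal (1 - εbar) ≤ P {u | ∀ j, f j u ≤ 0}} := by

  refine le_trans hA (measure_mono ?_)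
  intro ω hω
  simp only [Set.mem_setOf_eq]
  have hms : ∀ j, MeasurableSet {u : Fin d → ℝ | f j u ≤ 0} :=
    fun j => (isClosed_le (hcont j) continuous_const).measurableSet
  have hj : ∀ j, ENNReal.ofReal (1 - ε j) ≤ P {u | f j u ≤ 0} :=
    fun j => himp ω hω j (f j) (hconc j) (hcont j) (hfeas ω j)
  have hcompl : ∀ j, P {u : Fin d → ℝ | f j u ≤ 0}ᶜ ≤ ENNReal.ofReal (ε j) := by
    intro j
    rw [measure_compl (hms j) (measure_ne_top P _), measure_univ]
    refine tsub_le_iff_right.mpr ?_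
    calc (1:ENNReal) = ENNReal.ofReal 1 := by simp
    _ ≤ ENNReal.ofReal (ε j + (1 - ε j)) := by
        apply ENNReal.ofReal_le_ofReal; linarith
    _ ≤ ENNReal.ofReal (ε j) + ENNReal.ofReal (1 - ε j) := ENNReal.ofReal_add_le
    _ ≤ ENNReal.ofReal (ε j) + P {u | f j u ≤ 0} := by gcongr; exact hj j
  have hunion : P (⋃ j, {u : Fin d → ℝ | f j u ≤ 0}ᶜ) ≤ ENNReal.ofReal εbar := by
    calc P (⋃ j, {u : Fin d → ℝ | f j u ≤ 0}ᶜ)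
        ≤ ∑' j, P {u : Fin d → ℝ | f j u ≤ 0}ᶜ := measure_iUnion_le _
    _ = ∑ j, P {u : Fin d → ℝ | f j u ≤ 0}ᶜ := tsum_fintype _
    _ ≤ ∑ j, ENNReal.ofReal (ε j) := Finset.sum_le_sum (fun j _ => hcompl j)
    _ = ENNReal.ofReal (∑ j, ε j) := by
        rw [← ENNReal.ofReal_sum_of_nonneg (fun j _ => (hε j).le)]
    _ ≤ ENNReal.ofReal εbar := ENNReal.ofReal_le_ofReal hsum
  have hεbar : 0 ≤ εbar := le_trans (Finset.sum_nonneg (fun j _ => (hε j).le)) hsum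
  have hset : {u : Fin d → ℝ | ∀ j, f j u ≤ 0} = (⋃ j, {u : Fin d → ℝ | f j u ≤ 0}ᶜ)ᶜ := by
    ext u; simp
  rw [hset, measure_compl (MeasurableSet.iUnion (fun j => (hms j).compl)) (measure_ne_top P _),
    measure_univ]
  by_cases h1 : εbar ≤ 1
  · have h2 : ENNReal.ofReal (1 - εbar) ≤ 1 - ENNReal.ofReal εbar := by
      refine ENNReal.le_sub_of_add_le_right ENNReal.ofReal_ne_top ?_
      have : ENNReal.ofReal (1 - εbar) + ENNReal.ofReal εbar
          = ENNReal.ofReal (1 - εbar + εbar) := (ENNReal.ofReal_add (by linarith) hεbar).symm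
      rw [this]; norm_num
    exact h2.trans (tsub_le_tsub_left hunion 1)
  · have : ENNReal.ofReal (1 - εbar) = 0 := by
      rw [ENNReal.ofReal_eq_zero]; linarith
    simp [this]
end
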